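/- Let 𝒦 be the sub-automaton of a contract automaton A consisting of exactly the match transitions of A, and let KS_A be the automaton obtained from 𝒦 by deleting every transition whose source or target state is redundant in 𝒦 (a state is redundant iff no accepting state is reachable from it). Then a contract automaton is the most permissive controller of A if, and only if, it is language-equivalent to KS_A. -/

import Mathlib

namespace CAut

/-- A context of labels: requests, offers, a distinguished idle label, and an
involution swapping requests and offers and fixing the idle label. -/
structure LabelCtx (L : Type) where
  req : Set L
  off : Set L
  idle : L
  req_off_disj : ∀ a : L, ¬ (a ∈ req ∧ a ∈ off)
  idle_not_req : idle ∉ req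
  idle_not_off : idle ∉ off
  bar : L → L
  bar_req : ∀ a ∈ req, bar a ∈ off
  bar_off : ∀ a ∈ off, bar a ∈ req
  bar_bar : ∀ a ∈ req ∪ off, bar (bar a) = a
  bar_idle : bar idle = idle

variable {L Q : Type} {n : ℕ}

/-- A word consisting only of idle labels (□*). -/
def IdleWord (C : LabelCtx L) (w : List L) : Prop := ∀ x ∈ w, x = C.idle

/-- `w` is a request action on `b`: it has the form □* b □* with b ∈ 𝕣. -/
def IsRequestOn (C : LabelCtx L) (w : List L) (b : L) : Prop :=
  b ∈ C.req ∧ ∃ u v : List L, IdleWord C u ∧ IdleWord C v ∧ w = u ++ b :: v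

/-- `w` is an offer action on `b`: it has the form □* b □* with b ∈ 𝕠. -/
def IsOfferOn (C : LabelCtx L) (w : List L) (b : L) : Prop :=
  b ∈ C.off ∧ ∃ u v : List L, IdleWord C u ∧ IdleWord C v ∧ w = u ++ b :: v

/-- `w` is a match action on `b`: it has the form □* b □* b̄ □* with b ∈ 𝕣 ∪ 𝕠. -/
def IsMatchOn (C : LabelCtx L) (w : List L) (b : L) : Prop :=
  b ∈ C.req ∪ C.off ∧
    ∃ u v z : List L, IdleWord C u ∧ IdleWord C v ∧ IdleWord C z ∧
      w = u ++ b :: (v ++ C.bar b :: z)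

/-- An action is a request, offer, or match action (on some `b`). -/
def IsAction (C : LabelCtx L) (w : List L) : Prop :=
  ∃ b : L, IsRequestOn C w b ∨ IsOfferOn C w b ∨ IsMatchOn C w b

def IsMatch (C : LabelCtx L) (w : List L) : Prop := ∃ b : L, IsMatchOn C w b

/-- The relation ⋈̇ : both are actions of the same length, offers on `b` must face
requests on `b` and vice versa. -/
def BowtieDot (C : LabelCtx L) (u v : List L) : Prop :=
  IsAction C u ∧ IsAction C v ∧ u.length = v.length ∧
    (∀ b : L, IsOfferOn C u b → IsRequestOn C v b) ∧
    (∀ b : L, IsRequestOn C u b → IsOfferOn C v b)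

/-- ⋈ is the symmetric closure of ⋈̇. -/
def Bowtie (C : LabelCtx L) (u v : List L) : Prop :=
  BowtieDot C u v ∨ BowtieDot C v u

/-- A contract automaton of rank `n` (transition structure; the well-formedness
conditions are in `CAWF`). -/
structure CA (L Q : Type) (n : ℕ) where
  init : Fin n → Q
  trans : Set ((Fin n → Q) × (Fin n → L) × (Fin n → Q))
  acc : Set (Fin n → Q)

/-- Well-formedness of a contract automaton: every transition label is an action
(request, offer, or match), and components labelled □ stay idle. -/
def CAWF (C : LabelCtx L) (A : CA L Q n) : Prop :=
  ∀ t ∈ A.trans,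
    IsAction C (List.ofFn t.2.1) ∧
      ∀ i : Fin n, t.2.1 i = C.idle → t.1 i = t.2.2 i

/-- A run of a contract automaton from a state along a word ending in a state. -/
inductive CARun {L Q : Type} {n : ℕ} (A : CA L Q n) :
    (Fin n → Q) → List (Fin n → L) → (Fin n → Q) → Prop
  | nil (q : Fin n → Q) : CARun A q [] q
  | cons {q : Fin n → Q} {a : Fin n → L} {q' : Fin n → Q}
      {w : List (Fin n → L)} {q'' : Fin n → Q} :
      (q, a, q') ∈ A.trans → CARun A q' w q'' → CARun A q (a :: w) q''

/-- The language accepted by a contract automaton. -/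
def CALang (A : CA L Q n) : Set (List (Fin n → L)) :=
  { w | ∃ q, q ∈ A.acc ∧ CARun A A.init w q }

/-- A state is reachable from the initial state. -/
def CAReach (A : CA L Q n) (q : Fin n → Q) : Prop := ∃ w, CARun A A.init w q

def Deterministic (A : CA L Q n) : Prop :=
  ∀ q a q₁ q₂, (q, a, q₁) ∈ A.trans → (q, a, q₂) ∈ A.trans → q₁ = q₂

/-- A strong agreement: a finite non-empty word of match actions. -/
def StrongAgreement (C : LabelCtx L) (φ : List (Fin n → L)) : Prop :=
  φ ≠ [] ∧ ∀ a ∈ φ, IsMatch C (List.ofFn a)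

/-- A is strongly safe when its language consists of strong agreements only. -/
def StronglySafe (C : LabelCtx L) (A : CA L Q n) : Prop :=
  ∀ w ∈ CALang A, StrongAgreement C w

/-- K is a (strong) controller of A: a contract automaton with
L(K) ⊆ 𝔷 ∩ L(A). -/
def IsController (C : LabelCtx L) (A : CA L Q n) {Q' : Type} (K : CA L Q' n) : Prop :=
  CAWF C K ∧ ∀ w ∈ CALang K, StrongAgreement C w ∧ w ∈ CALang A

/-- K is a most permissive controller of A: a controller whose language contains
the language of every controller of A. -/
def IsMPC (C : LabelCtx L) (A : CA L Q n) {Q' : Type} (K : CA L Q' n) : Prop :=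
  IsController C A K ∧
    ∀ (Q'' : Type) (K' : CA L Q'' n), IsController C A K' → CALang K' ⊆ CALang K

/-- The sub-automaton 𝒦 of A consisting of the match transitions of A only. -/
def matchSub (C : LabelCtx L) (A : CA L Q n) : CA L Q n where
  init := A.init
  trans := { t | t ∈ A.trans ∧ IsMatch C (List.ofFn t.2.1) }
  acc := A.acc

/-- A state is redundant when no accepting state can be reached from it. -/
def Redundant (K : CA L Q n) (q : Fin n → Q) : Prop :=
  ¬ ∃ w qf, qf ∈ K.acc ∧ CARun K q w qf

/-- The concrete most permissive controller KS_A: the match transitions of A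
whose source and target are not redundant in 𝒦. -/
def mpc (C : LabelCtx L) (A : CA L Q n) : CA L Q n where
  init := A.init
  trans := { t | t ∈ (matchSub C A).trans ∧
      ¬ Redundant (matchSub C A) t.1 ∧ ¬ Redundant (matchSub C A) t.2.2 }
  acc := A.acc

/-! ### Communicating machines -/

/-- Actions of communicating machines: sends `(sr)!a` and receives `(sr)?a`;
`none` stands for the anonymous environment participant `−`. -/
inductive CAct (n : ℕ) (L : Type) : Type
  | send (s r : Option (Fin n)) (a : L) : CAct n L
  | recv (s r : Option (Fin n)) (a : L) : CAct n L

/-- `v` is a match action (as a rank-`n` tuple) on the request name `a`, with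
offer component `i` and request component `j`. -/
def MatchAt (C : LabelCtx L) (v : Fin n → L) (i j : Fin n) (a : L) : Prop :=
  i ≠ j ∧ a ∈ C.req ∧ v i = C.bar a ∧ v j = a ∧
    ∀ k : Fin n, k ≠ i → k ≠ j → v k = C.idle

/-- `v` is an offer action with offer component `i`, on the request name `a`. -/
def OfferAt (C : LabelCtx L) (v : Fin n → L) (i : Fin n) (a : L) : Prop :=
  a ∈ C.req ∧ v i = C.bar a ∧ ∀ k : Fin n, k ≠ i → v k = C.idle

/-- `v` is a request action with request component `j`, on the name `a`. -/
def RequestAt (C : LabelCtx L) (v : Fin n → L) (j : Fin n) (a : L) : Prop :=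
  a ∈ C.req ∧ v j = a ∧ ∀ k : Fin n, k ≠ j → v k = C.idle

/-- The CFSM transitions of participant `p` obtained by translating the contract
automaton `A` (Definition of the translation ⟦A⟧_p). -/
def cfsmTrans (C : LabelCtx L) (A : CA L Q n) (p : Fin n) :
    Set (Q × CAct n L × Q) :=
  { t | ∃ q v q', (q, v, q') ∈ A.trans ∧
      ((∃ i j a, MatchAt C v i j a ∧ p = i ∧
          t = (q i, CAct.send (some i) (some j) a, q' i)) ∨
       (∃ i j a, MatchAt C v i j a ∧ p = j ∧
          t = (q j, CAct.recv (some i) (some j) a, q' j)) ∨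
       (∃ i a, OfferAt C v i a ∧ p = i ∧
          t = (q i, CAct.send (some i) none a, q' i)) ∨
       (∃ j a, RequestAt C v j a ∧ p = j ∧
          t = (q j, CAct.recv none (some j) a, q' j))) }

/-- A configuration of a communicating system: local states and FIFO buffers. -/
structure Conf (n : ℕ) (Q L : Type) where
  st : Fin n → Q
  buf : Option (Fin n) × Option (Fin n) → List L

/-- The (unrestricted, unbounded-buffer) step relation of a communicating system
with transition relations `δ p` for each participant `p`. -/
inductive Step {L Q : Type} {n : ℕ} (δ : Fin n → Set (Q × CAct n L × Q)) :
    Conf n Q L → CAct n L → Conf n Q L → Prop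
  | send {c : Conf n Q L} {i : Fin n} {r : Option (Fin n)} {a : L} {q' : Q} :
      (c.st i, CAct.send (some i) r a, q') ∈ δ i →
      Step δ c (CAct.send (some i) r a)
        ⟨Function.update c.st i q',
          Function.update c.buf (some i, r) (c.buf (some i, r) ++ [a])⟩
  | recv {c : Conf n Q L} {s : Option (Fin n)} {j : Fin n} {a : L} {q' : Q}
      {rest : List L} :
      (c.st j, CAct.recv s (some j) a, q') ∈ δ j →
      c.buf (s, some j) = a :: rest →
      Step δ c (CAct.recv s (some j) a)
        ⟨Function.update c.st j q', Function.update c.buf (s, some j) rest⟩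

/-- Reachability in the unrestricted semantics. -/
def ReachU (δ : Fin n → Set (Q × CAct n L × Q)) : Conf n Q L → Conf n Q L → Prop :=
  Relation.ReflTransGen (fun c c' => ∃ ℓ, Step δ c ℓ c')

/-- All buffers are empty. -/
def Stable (c : Conf n Q L) : Prop := ∀ ch, c.buf ch = []

/-- The configuration is stable, or exactly one channel contains exactly one message. -/
def AtMostOne (c : Conf n Q L) : Prop :=
  Stable c ∨ ∃ ch a, c.buf ch = [a] ∧ ∀ ch', ch' ≠ ch → c.buf ch' = []

/-- Membership in RS≤1: reachable (from `c0`) and stable or with a single message. -/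
def RS1 (δ : Fin n → Set (Q × CAct n L × Q)) (c0 c : Conf n Q L) : Prop :=
  ReachU δ c0 c ∧ AtMostOne c

/-- The 1-buffer step relation ↠, relative to the initial configuration `c0`. -/
def Step1 (δ : Fin n → Set (Q × CAct n L × Q)) (c0 c : Conf n Q L)
    (ℓ : CAct n L) (c' : Conf n Q L) : Prop :=
  Step δ c ℓ c' ∧ RS1 δ c0 c ∧ RS1 δ c0 c'

/-- Firing a sequence of actions under the 1-buffer semantics. -/
inductive Steps1 {L Q : Type} {n : ℕ} (δ : Fin n → Set (Q × CAct n L × Q))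
    (c0 : Conf n Q L) : Conf n Q L → List (CAct n L) → Conf n Q L → Prop
  | nil (c : Conf n Q L) : Steps1 δ c0 c [] c
  | cons {c : Conf n Q L} {ℓ : CAct n L} {c' : Conf n Q L}
      {f : List (CAct n L)} {c'' : Conf n Q L} :
      Step1 δ c0 c ℓ c' → Steps1 δ c0 c' f c'' → Steps1 δ c0 c (ℓ :: f) c''

/-- Reachability under the 1-buffer semantics. -/
def Reach1 (δ : Fin n → Set (Q × CAct n L × Q)) (c0 c c' : Conf n Q L) : Prop :=
  ∃ f, Steps1 δ c0 c f c'

/-- The initial configuration of the communicating system obtained from `A`. -/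
def initConf (A : CA L Q n) : Conf n Q L := ⟨A.init, fun _ => []⟩

/-- Final configuration: stable with accepting (vector of) local states. -/
def FinalConf (Facc : Set (Fin n → Q)) (c : Conf n Q L) : Prop :=
  Stable c ∧ c.st ∈ Facc

/-- Deadlock under the 1-buffer semantics: not final and no outgoing ↠ step. -/
def Deadlock1 (δ : Fin n → Set (Q × CAct n L × Q)) (c0 : Conf n Q L)
    (Facc : Set (Fin n → Q)) (c : Conf n Q L) : Prop :=
  ¬ FinalConf Facc c ∧ ¬ ∃ ℓ c', Step1 δ c0 c ℓ c'

/-- Convergence under the 1-buffer semantics: from every reachable configuration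
a final configuration is reachable. -/
def Convergent1 (δ : Fin n → Set (Q × CAct n L × Q)) (c0 : Conf n Q L)
    (Facc : Set (Fin n → Q)) : Prop :=
  ∀ c, Reach1 δ c0 c0 c → ∃ c', Reach1 δ c0 c c' ∧ FinalConf Facc c'

/-- Convergence under the unrestricted (unbounded-buffer) semantics. -/
def ConvergentU (δ : Fin n → Set (Q × CAct n L × Q)) (c0 : Conf n Q L)
    (Facc : Set (Fin n → Q)) : Prop :=
  ∀ c, ReachU δ c0 c → ∃ c', ReachU δ c c' ∧ FinalConf Facc c'

/-- The translation ⟦φ⟧ of a word of contract-automaton actions into a trace of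
communicating-machine actions (a relation, since ⟦·⟧ is partial). -/
inductive SemWord {L : Type} {n : ℕ} (C : LabelCtx L) :
    List (Fin n → L) → List (CAct n L) → Prop
  | nil : SemWord C [] []
  | matchw {v : Fin n → L} {i j : Fin n} {a : L} {φ : List (Fin n → L)}
      {f : List (CAct n L)} :
      MatchAt C v i j a → SemWord C φ f →
      SemWord C (v :: φ)
        (CAct.send (some i) (some j) a :: CAct.recv (some i) (some j) a :: f)
  | offerw {v : Fin n → L} {i : Fin n} {a : L} {φ : List (Fin n → L)}
      {f : List (CAct n L)} :
      OfferAt C v i a → SemWord C φ f →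
      SemWord C (v :: φ) (CAct.send (some i) none a :: f)
  | requestw {v : Fin n → L} {j : Fin n} {a : L} {φ : List (Fin n → L)}
      {f : List (CAct n L)} :
      RequestAt C v j a → SemWord C φ f →
      SemWord C (v :: φ) (CAct.recv none (some j) a :: f)

/-- A liable transition of the controlled system KS_A/A: a transition of A, not
in the controller, whose source is reachable in the controller. -/
def Liable (C : LabelCtx L) (A : CA L Q n)
    (t : (Fin n → Q) × (Fin n → L) × (Fin n → Q)) : Prop :=
  t ∈ A.trans ∧ t ∉ (mpc C A).trans ∧ CAReach (mpc C A) t.1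

/-- The run of A from its initial state labelled φ traverses a liable transition. -/
def TraversesLiable (C : LabelCtx L) (A : CA L Q n) (φ : List (Fin n → L)) : Prop :=
  ∃ φ₁ v φ₂ q q', φ = φ₁ ++ v :: φ₂ ∧ CARun A A.init φ₁ q ∧
    Liable C A (q, v, q')

/-- The branching condition. -/
def Branching (C : LabelCtx L) (B : CA L Q n) : Prop :=
  ∀ q₁ q₂, CAReach B q₁ → CAReach B q₂ →
    ∀ (v : Fin n → L) (i j : Fin n) (a : L), MatchAt C v i j a →
      (∃ q', (q₁, v, q') ∈ B.trans) → q₁ i = q₂ i →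
      ∃ q'', (q₂, v, q'') ∈ B.trans

/-- A mixed-choice state: some participant has both an outgoing offer (p-th label
component in 𝕠) and an outgoing request (p-th label component in 𝕣). -/
def MixedChoiceState (C : LabelCtx L) (A : CA L Q n) (q : Fin n → Q) : Prop :=
  ∃ (p : Fin n) (v₁ : Fin n → L) (q₁ : Fin n → Q) (v₂ : Fin n → L) (q₂ : Fin n → Q),
    (q, v₁, q₁) ∈ A.trans ∧ (q, v₂, q₂) ∈ A.trans ∧ v₁ p ∈ C.off ∧ v₂ p ∈ C.req

/-- A principal: a rank-1 contract automaton no two of whose transitions have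
complementary (⋈) labels. -/
def IsPrincipal (C : LabelCtx L) (P : CA L Q 1) : Prop :=
  CAWF C P ∧ ∀ t₁ ∈ P.trans, ∀ t₂ ∈ P.trans,
    ¬ Bowtie C (List.ofFn t₁.2.1) (List.ofFn t₂.2.1)

/-- The idle tuple □ⁿ. -/
def idleVec (C : LabelCtx L) (m : ℕ) : Fin m → L := fun _ => C.idle

/-- The (binary) product of contract automata: synchronisation of ⋈-related
transitions; single components may move alone only when no synchronisation with
the other component is possible from the current state. -/
def prodCA (C : LabelCtx L) {m k : ℕ} (A : CA L Q m) (B : CA L Q k) :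
    CA L Q (m + k) where
  init := Fin.append A.init B.init
  acc := { q | ∃ qa qb, qa ∈ A.acc ∧ qb ∈ B.acc ∧ q = Fin.append qa qb }
  trans := { t |
    (∃ qa a qa' qb b qb', (qa, a, qa') ∈ A.trans ∧ (qb, b, qb') ∈ B.trans ∧
        Bowtie C (List.ofFn a) (List.ofFn b) ∧
        t = (Fin.append qa qb, Fin.append a b, Fin.append qa' qb')) ∨
    (∃ qa a qa' qb, (qa, a, qa') ∈ A.trans ∧
        (∀ b qb', (qb, b, qb') ∈ B.trans → ¬ Bowtie C (List.ofFn a) (List.ofFn b)) ∧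
        t = (Fin.append qa qb, Fin.append a (idleVec C k), Fin.append qa' qb)) ∨
    (∃ qb b qb' qa, (qb, b, qb') ∈ B.trans ∧
        (∀ a qa', (qa, a, qa') ∈ A.trans → ¬ Bowtie C (List.ofFn b) (List.ofFn a)) ∧
        t = (Fin.append qa qb, Fin.append (idleVec C m) b, Fin.append qa qb')) }

/-- Final configuration with per-participant accepting sets. -/
def FinalP {L Q : Type} {n : ℕ} (Facc : Fin n → Set Q) (c : Conf n Q L) : Prop :=
  Stable c ∧ ∀ p : Fin n, c.st p ∈ Facc p

theorem CARun.mono {A B : CA L Q n} (h : A.trans ⊆ B.trans)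
    {q : Fin n → Q} {w : List (Fin n → L)} {q' : Fin n → Q}
    (hr : CARun A q w q') : CARun B q w q' := by
  induction hr with
  | nil q => exact CARun.nil q
  | cons ht _ ih => exact CARun.cons (h ht) ih

theorem run_matchSub (C : LabelCtx L) {A : CA L Q n}
    {q : Fin n → Q} {w : List (Fin n → L)} {qf : Fin n → Q}
    (hr : CARun A q w qf) (hm : ∀ a ∈ w, IsMatch C (List.ofFn a)) :
    CARun (matchSub C A) q w qf := by
  induction hr with
  | nil q => exact CARun.nil q
  | cons ht hr ih =>
    exact CARun.cons ⟨ht, hm _ List.mem_cons_self⟩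
      (ih fun a ha => hm a (List.mem_cons_of_mem _ ha))

theorem run_mpc (C : LabelCtx L) {A : CA L Q n}
    {q : Fin n → Q} {w : List (Fin n → L)} {qf : Fin n → Q}
    (hr : CARun (matchSub C A) q w qf) (hf : qf ∈ A.acc) :
    CARun (mpc C A) q w qf := by
  revert hf
  induction hr with
  | nil q => exact fun _ => CARun.nil q
  | @cons q a q' w q'' ht hr ih =>
    intro hf
    exact CARun.cons
      ⟨ht, fun hred => hred ⟨a :: w, q'', hf, CARun.cons ht hr⟩,
        fun hred => hred ⟨w, q'', hf, hr⟩⟩ (ih hf)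

theorem run_mpc_match (C : LabelCtx L) {A : CA L Q n}
    {q : Fin n → Q} {w : List (Fin n → L)} {qf : Fin n → Q}
    (hr : CARun (mpc C A) q w qf) : ∀ a ∈ w, IsMatch C (List.ofFn a) := by
  induction hr with
  | nil q => intro a ha; exact absurd ha List.not_mem_nil
  | @cons q a q' w q'' ht _ ih =>
    intro b hb
    rcases List.mem_cons.1 hb with h | h
    · subst h; exact ht.1.2
    · exact ih b h

theorem mpc_isController (C : LabelCtx L) {A : CA L Q n}
    (hA : CAWF C A) (hinit : A.init ∉ A.acc) : IsController C A (mpc C A) := by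
  constructor
  · exact fun t ht => hA t ht.1.1
  · rintro w ⟨q, hq, hr⟩
    have hmatch : ∀ a ∈ w, IsMatch C (List.ofFn a) := run_mpc_match C hr
    have hsub : (mpc C A).trans ⊆ A.trans := fun t ht => ht.1.1
    have hrA : CARun A A.init w q := hr.mono hsub
    refine ⟨⟨?_, hmatch⟩, q, hq, hrA⟩
    rintro rfl
    cases hr
    exact hinit hq

theorem mpc_isMPC (C : LabelCtx L) {A : CA L Q n}
    (hA : CAWF C A) (hinit : A.init ∉ A.acc) : IsMPC C A (mpc C A) := by
  refine ⟨mpc_isController C hA hinit, ?_⟩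
  rintro Q'' K' ⟨hKwf, hK⟩ w hw
  obtain ⟨⟨hne, hmatch⟩, q, hq, hrA⟩ := hK w hw
  exact ⟨q, hq, run_mpc C (run_matchSub C hrA hmatch) hq⟩

/-- a contract automaton is the most permissive controller of A
iff it is language-equivalent to the automaton KS_A obtained from the match
sub-automaton 𝒦 of A by deleting all transitions with a redundant endpoint. -/
theorem mpc_characterisation {L Q Q' : Type} {n : ℕ}
    (C : LabelCtx L) (A : CA L Q n)
    (hA : CAWF C A) (hdet : Deterministic A) (hinit : A.init ∉ A.acc)
    (B : CA L Q' n) (hB : CAWF C B) :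
    IsMPC C A B ↔ CALang B = CALang (mpc C A) := by
  have hM := mpc_isMPC C hA hinit
  constructor
  · rintro ⟨hBc, hBm⟩
    exact Set.Subset.antisymm (hM.2 _ B hBc) (hBm _ _ hM.1)
  · intro h
    refine ⟨⟨hB, fun w hw => hM.1.2 w (h ▸ hw)⟩, ?_⟩
    intro Q'' K' hK' w hw
    have := hM.2 _ K' hK' hw
    rw [h]
    exact this

end CAut
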